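/- arXiv:1210.4799 — 2 statements merged into one kernel-verified Lean document; each statement's English description precedes it below -/
import Mathlib

section
/- Let V be a finite-dimensional real vector space, S a finite nonempty set of linear functionals on V, x(v) = max_{ℓ ∈ S} ℓ(v), and Argmax(v) = {ℓ ∈ S : ℓ(v) = x(v)}. Then for any φ, ψ ∈ V there exists m ∈ ℕ such that Argmax(mφ + ψ) ⊆ Argmax(φ). (This is the statement that φ is subordinate to mφ + ψ for some m, part (2) of the subordination lemma.) -/
/-- Subordination lemma, part (2): if `x v = max_{ℓ ∈ S} ℓ v` for a finite nonempty
set `S` of linear functionals on a finite-dimensional real vector space `V`, and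
`Argmax v = {ℓ | ℓ ∈ S ∧ ℓ v = x v}`, then for any `φ ψ : V` there is an `m : ℕ` with
`Argmax (m • φ + ψ) ⊆ Argmax φ`, i.e. `φ` is subordinate to `m • φ + ψ`. -/
theorem exists_subordinate_perturbation
    {V : Type*} [AddCommGroup V] [Module ℝ V] [FiniteDimensional ℝ V]
    (S : Finset (V →ₗ[ℝ] ℝ)) (hS : S.Nonempty)
    (x : V → ℝ) (hx : ∀ v, x v = S.sup' hS (fun ℓ => ℓ v))
    (Argmax : V → Set (V →ₗ[ℝ] ℝ))
    (hA : ∀ v, Argmax v = {ℓ | ℓ ∈ S ∧ ℓ v = x v})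
    (φ ψ : V) :
    ∃ m : ℕ, Argmax ((m : ℝ) • φ + ψ) ⊆ Argmax φ := by
  -- pick ℓ₀ achieving the max at φ
  obtain ⟨ℓ₀, hℓ₀S, hℓ₀⟩ := Finset.exists_mem_eq_sup' hS (fun ℓ : V →ₗ[ℝ] ℝ => ℓ φ)
  have hℓ₀φ : ℓ₀ φ = x φ := by rw [hx]; exact hℓ₀.symm
  -- bound
  set r : (V →ₗ[ℝ] ℝ) → ℝ := fun ℓ =>
    if ℓ φ < x φ then (ℓ ψ - ℓ₀ ψ) / (x φ - ℓ φ) else 0 with hr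
  obtain ⟨m, hm⟩ := exists_nat_gt (S.sup' hS r)
  refine ⟨m, ?_⟩
  intro ℓ hℓ
  rw [hA] at hℓ
  obtain ⟨hℓS, hℓeq⟩ := hℓ
  rw [hA]
  refine ⟨hℓS, ?_⟩
  by_contra hne
  have hle : ℓ φ ≤ x φ := by
    rw [hx]; exact Finset.le_sup' (fun ℓ : V →ₗ[ℝ] ℝ => ℓ φ) hℓS
  have hlt : ℓ φ < x φ := lt_of_le_of_ne hle hne
  have hmgt : (m : ℝ) > (ℓ ψ - ℓ₀ ψ) / (x φ - ℓ φ) := by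
    have := Finset.le_sup' r hℓS
    have hr' : r ℓ = (ℓ ψ - ℓ₀ ψ) / (x φ - ℓ φ) := by simp [hr, hlt]
    linarith [hr' ▸ this]
  have hden : 0 < x φ - ℓ φ := by linarith
  have hkey : ℓ ψ - ℓ₀ ψ < (m : ℝ) * (x φ - ℓ φ) := (div_lt_iff₀ hden).mp hmgt
  -- value of ℓ at the perturbed point
  have hval : ℓ ((m : ℝ) • φ + ψ) = (m : ℝ) * ℓ φ + ℓ ψ := by simp
  have hval0 : ℓ₀ ((m : ℝ) • φ + ψ) = (m : ℝ) * ℓ₀ φ + ℓ₀ ψ := by simp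
  have hmax : ℓ₀ ((m : ℝ) • φ + ψ) ≤ x ((m : ℝ) • φ + ψ) := by
    rw [hx]; exact Finset.le_sup' (fun ℓ : V →ₗ[ℝ] ℝ => ℓ ((m : ℝ) • φ + ψ)) hℓ₀S
  have : (m : ℝ) * ℓ₀ φ + ℓ₀ ψ > (m : ℝ) * ℓ φ + ℓ ψ := by nlinarith
  linarith [hℓeq ▸ hmax]
end

section
/- Let V be a finite-dimensional real vector space, S a finite nonempty set of linear functionals on V, x(v) = max_{ℓ ∈ S} ℓ(v), and Argmax(v) = {ℓ ∈ S : ℓ(v) = x(v)}. Let φ, ψ ∈ V and m ∈ ℕ. If Argmax(mφ + ψ) ⊆ Argmax(φ), then for every natural number k ≥ m one has Argmax(kφ + ψ) ⊆ Argmax(φ). (This is part (3) of the subordination lemma: if φ is subordinate to mφ + ψ, then φ is subordinate to kφ + ψ for all k ≥ m.) -/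
/-- Subordination lemma, part (3): with `x v = max_{ℓ ∈ S} ℓ v` and
`Argmax v = {ℓ ∈ S | ℓ v = x v}` for a finite nonempty set `S` of linear functionals
on a finite-dimensional real vector space, if `Argmax (m • φ + ψ) ⊆ Argmax φ`, then
`Argmax (k • φ + ψ) ⊆ Argmax φ` for every `k ≥ m`. -/
theorem subordinate_perturbation_monotone
    {V : Type*} [AddCommGroup V] [Module ℝ V] [FiniteDimensional ℝ V]
    (S : Finset (V →ₗ[ℝ] ℝ)) (hS : S.Nonempty)
    (x : V → ℝ) (hx : ∀ v, x v = S.sup' hS (fun ℓ => ℓ v))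
    (Argmax : V → Set (V →ₗ[ℝ] ℝ))
    (hA : ∀ v, Argmax v = {ℓ | ℓ ∈ S ∧ ℓ v = x v})
    (φ ψ : V) (m : ℕ)
    (hm : Argmax ((m : ℝ) • φ + ψ) ⊆ Argmax φ) :
    ∀ k : ℕ, m ≤ k → Argmax ((k : ℝ) • φ + ψ) ⊆ Argmax φ := by
  intro k hk ℓ hℓ
  rcases eq_or_lt_of_le hk with rfl | hk'
  · exact hm hℓ
  have hc : (0 : ℝ) < (k : ℝ) - m := by
    have : (m : ℝ) < k := by exact_mod_cast hk'
    linarith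
  set c : ℝ := (k : ℝ) - m with hcdef
  -- decomposition of values
  have hdecomp : ∀ ℓ' : V →ₗ[ℝ] ℝ,
      ℓ' ((k : ℝ) • φ + ψ) = c * ℓ' φ + ℓ' ((m : ℝ) • φ + ψ) := by
    intro ℓ'
    have : (k : ℝ) • φ = c • φ + (m : ℝ) • φ := by
      rw [← add_smul, hcdef, sub_add_cancel]
    rw [this, add_assoc]
    simp [map_add, map_smul]
  -- maximizer of mφ+ψ
  obtain ⟨ℓ₀, hℓ₀S, hℓ₀⟩ := Finset.exists_mem_eq_sup' hS (fun ℓ => ℓ ((m : ℝ) • φ + ψ))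
  have hℓ₀A : ℓ₀ ∈ Argmax ((m : ℝ) • φ + ψ) := by
    rw [hA]; exact ⟨hℓ₀S, by rw [hx]; exact hℓ₀.symm⟩
  have hℓ₀φ : ℓ₀ φ = x φ := by
    have := hm hℓ₀A
    rw [hA] at this
    exact this.2
  -- the sup of kφ+ψ equals c * x φ + x (mφ+ψ)
  have hsup : x ((k : ℝ) • φ + ψ) = c * x φ + x ((m : ℝ) • φ + ψ) := by
    rw [hx]
    apply le_antisymm
    · apply Finset.sup'_le
      intro ℓ' hℓ'S
      rw [hdecomp]
      have h1 : ℓ' φ ≤ x φ := by rw [hx]; exact Finset.le_sup' (fun ℓ => ℓ φ) hℓ'S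
      have h2 : ℓ' ((m : ℝ) • φ + ψ) ≤ x ((m : ℝ) • φ + ψ) := by
        rw [hx]; exact Finset.le_sup' (fun ℓ => ℓ ((m : ℝ) • φ + ψ)) hℓ'S
      nlinarith [hc.le]
    · have : ℓ₀ ((k : ℝ) • φ + ψ) = c * x φ + x ((m : ℝ) • φ + ψ) := by
        rw [hdecomp, hℓ₀φ, hx ((m : ℝ) • φ + ψ), ← hℓ₀]
      rw [← this]
      exact Finset.le_sup' (fun ℓ => ℓ ((k : ℝ) • φ + ψ)) hℓ₀S
  rw [hA] at hℓ ⊢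
  obtain ⟨hℓS, hℓeq⟩ := hℓ
  refine ⟨hℓS, ?_⟩
  have h1 : ℓ φ ≤ x φ := by rw [hx]; exact Finset.le_sup' (fun ℓ => ℓ φ) hℓS
  have h2 : ℓ ((m : ℝ) • φ + ψ) ≤ x ((m : ℝ) • φ + ψ) := by
    rw [hx]; exact Finset.le_sup' (fun ℓ => ℓ ((m : ℝ) • φ + ψ)) hℓS
  have hval : c * ℓ φ + ℓ ((m : ℝ) • φ + ψ) = c * x φ + x ((m : ℝ) • φ + ψ) := by
    rw [← hdecomp, hℓeq, hsup]
  nlinarith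
end
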